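/- Let A be an N×N doubly stochastic matrix with positive diagonal whose associated graph is strongly connected, let C ⊆ ℝⁿ be nonempty closed convex, α ∈ (0,1], and let T : ℝ^{Nn} → ℝ^{Nn} act blockwise by T_i = (1−β) proj_C + β Q_C for β ∈ [0,1). Define S(w) := (1−α)(A⊗I_n)w + α(A⊗I_n)T(w). Then fix(S) = 𝒜 ∩ C^N, where 𝒜 is the consensus set and C^N = {col(x₁,…,x_N) : x_i ∈ C ∀i}. In particular every consensus vector col(c,…,c) with c ∈ C is a fixed point of S. -/

import Mathlib

open Finset
open scoped RealInnerProductSpace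

section aux
variable {E : Type*} [NormedAddCommGroup E] [InnerProductSpace ℝ E]

lemma my_proj_var {C : Set E} (hCo : Convex ℝ C)
    {P : E → E} (hP : ∀ x, P x ∈ C ∧ ∀ z ∈ C, ‖x - P x‖ ≤ ‖x - z‖)
    (x : E) {z : E} (hz : z ∈ C) : ⟪x - P x, z - P x⟫ ≤ 0 := by
  have hmem := (hP x).1
  have hne : Nonempty C := ⟨⟨P x, hmem⟩⟩
  have hinf : ‖x - P x‖ = ⨅ w : C, ‖x - w‖ := by
    refine le_antisymm (le_ciInf fun w => (hP x).2 w w.2) ?_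
    have hbdd : BddBelow (Set.range fun w : C => ‖x - (w : E)‖) :=
      ⟨0, by rintro b ⟨w, rfl⟩; exact norm_nonneg _⟩
    exact ciInf_le hbdd ⟨P x, hmem⟩
  exact ((norm_eq_iInf_iff_real_inner_le_zero hCo hmem).1 hinf) z hz

lemma my_T_step_le {C : Set E} (hCo : Convex ℝ C)
    {P : E → E} (hP : ∀ x, P x ∈ C ∧ ∀ z ∈ C, ‖x - P x‖ ≤ ‖x - z‖)
    {β : ℝ} (hβ0 : 0 ≤ β) (hβ1 : β ≤ 1) {c : E} (hc : c ∈ C) (x : E) :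
    ‖((1 - β) • P x + β • ((2:ℝ) • P x - x)) - c‖ ≤ ‖x - c‖ := by
  set u := P x - c with hu
  set t := x - c with ht
  have hrw : ((1 - β) • P x + β • ((2:ℝ) • P x - x)) - c = (1 + β) • u - β • t := by
    rw [hu, ht]; module
  have hip : ‖u‖ ^ 2 ≤ ⟪t, u⟫ := by
    have h := my_proj_var hCo hP x hc
    have h1 : x - P x = t - u := by rw [hu, ht]; abel
    have h2 : c - P x = -u := by rw [hu]; abel
    rw [h1, h2, inner_neg_right, inner_sub_left, real_inner_self_eq_norm_sq] at h
    linarith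
  have hun : ‖u‖ ≤ ‖t‖ := by
    nlinarith [real_inner_le_norm t u, norm_nonneg u, norm_nonneg t]
  have hsq : ‖(1 + β) • u - β • t‖ ^ 2 ≤ ‖t‖ ^ 2 := by
    have hexp : ‖(1 + β) • u - β • t‖ ^ 2
        = (1 + β) ^ 2 * ‖u‖ ^ 2 - 2 * ((1 + β) * β) * ⟪u, t⟫ + β ^ 2 * ‖t‖ ^ 2 := by
      rw [norm_sub_sq_real, norm_smul, norm_smul, real_inner_smul_left, real_inner_smul_right,
        Real.norm_eq_abs, Real.norm_eq_abs, abs_of_nonneg (by linarith : (0:ℝ) ≤ 1 + β),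
        abs_of_nonneg hβ0]
      ring
    rw [hexp]
    have hit : ⟪u, t⟫ = ⟪t, u⟫ := real_inner_comm _ _
    nlinarith [mul_nonneg (mul_nonneg hβ0 (by linarith : (0:ℝ) ≤ 1 + β)) (by linarith [hip] : (0:ℝ) ≤ ⟪t, u⟫ - ‖u‖ ^ 2),
      mul_nonneg (by nlinarith : (0:ℝ) ≤ 1 - β ^ 2) (by nlinarith [norm_nonneg u, norm_nonneg t] : (0:ℝ) ≤ ‖t‖ ^ 2 - ‖u‖ ^ 2)]
  rw [hrw]
  have := Real.sqrt_le_sqrt hsq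
  rwa [Real.sqrt_sq (norm_nonneg _), Real.sqrt_sq (norm_nonneg _)] at this

lemma my_variance {N : ℕ} (a : Fin N → ℝ) (hsum : ∑ j, a j = 1) (x : Fin N → E) :
    (∑ j, a j * ‖x j‖ ^ 2) - ‖∑ j, a j • x j‖ ^ 2
      = (1 / 2) * ∑ j, ∑ k, a j * a k * ‖x j - x k‖ ^ 2 := by
  have hinner : ‖∑ j, a j • x j‖ ^ 2 = ∑ j, ∑ k, a j * a k * ⟪x j, x k⟫ := by
    rw [← real_inner_self_eq_norm_sq, sum_inner]
    refine Finset.sum_congr rfl fun j _ => ?_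
    rw [real_inner_smul_left, inner_sum, Finset.mul_sum]
    exact Finset.sum_congr rfl fun k _ => by rw [real_inner_smul_right]; ring
  have h1 : ∀ j k : Fin N, a j * a k * ‖x j - x k‖ ^ 2
      = a j * a k * ‖x j‖ ^ 2 + a j * a k * ‖x k‖ ^ 2 - 2 * (a j * a k * ⟪x j, x k⟫) := by
    intro j k
    rw [norm_sub_sq_real]
    ring
  have hA : ∑ j, ∑ k, a j * a k * ‖x j‖ ^ 2 = ∑ j, a j * ‖x j‖ ^ 2 := by
    refine Finset.sum_congr rfl fun j _ => ?_
    have h2 : ∀ k, a j * a k * ‖x j‖ ^ 2 = a k * (a j * ‖x j‖ ^ 2) := fun k => by ring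
    rw [Finset.sum_congr rfl fun k _ => h2 k, ← Finset.sum_mul, hsum, one_mul]
  have hB : ∑ j, ∑ k, a j * a k * ‖x k‖ ^ 2 = ∑ k, a k * ‖x k‖ ^ 2 := by
    rw [Finset.sum_comm]
    refine Finset.sum_congr rfl fun k _ => ?_
    have h2 : ∀ j, a j * a k * ‖x k‖ ^ 2 = a j * (a k * ‖x k‖ ^ 2) := fun j => by ring
    rw [Finset.sum_congr rfl fun j _ => h2 j, ← Finset.sum_mul, hsum, one_mul]
  have hC2 : ∑ j, ∑ k, (2:ℝ) * (a j * a k * ⟪x j, x k⟫)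
      = 2 * ∑ j, ∑ k, a j * a k * ⟪x j, x k⟫ := by
    rw [Finset.mul_sum]
    exact Finset.sum_congr rfl fun j _ => (Finset.mul_sum _ _ _).symm
  have hsplit : ∑ j, ∑ k, a j * a k * ‖x j - x k‖ ^ 2
      = (∑ j, a j * ‖x j‖ ^ 2) + (∑ k, a k * ‖x k‖ ^ 2)
        - 2 * ∑ j, ∑ k, a j * a k * ⟪x j, x k⟫ := by
    simp_rw [h1]
    have hd : ∀ j : Fin N, ∑ k, (a j * a k * ‖x j‖ ^ 2 + a j * a k * ‖x k‖ ^ 2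
          - 2 * (a j * a k * ⟪x j, x k⟫))
        = (∑ k, a j * a k * ‖x j‖ ^ 2) + (∑ k, a j * a k * ‖x k‖ ^ 2)
          - ∑ k, 2 * (a j * a k * ⟪x j, x k⟫) := fun j => by
      rw [Finset.sum_sub_distrib, Finset.sum_add_distrib]
    rw [Finset.sum_congr rfl fun j _ => hd j, Finset.sum_sub_distrib,
      Finset.sum_add_distrib, hA, hB, hC2]
  rw [hinner, hsplit]
  ring

end aux


/-- for the operator S(w) = (1−α)(A⊗I_n)w + α(A⊗I_n)T(w), where A
is doubly stochastic with positive diagonal and strongly connected graph, and T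
acts blockwise as (1−β)proj_C + βQ_C, we have fix(S) = 𝒜 ∩ C^N; in particular
every consensus vector col(c,…,c) with c ∈ C is a fixed point of S. -/
theorem fixed_points_of_distributed_allocation_operator {N n : ℕ}
    (A : Matrix (Fin N) (Fin N) ℝ)
    (hnonneg : ∀ i j, 0 ≤ A i j)
    (hrow : ∀ i, ∑ j, A i j = 1)
    (hcol : ∀ j, ∑ i, A i j = 1)
    (hdiag : ∀ i, 0 < A i i)
    (hconn : ∀ j i : Fin N, Relation.ReflTransGen (fun a b => 0 < A b a) j i)
    (C : Set (EuclideanSpace ℝ (Fin n)))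
    (hC : C.Nonempty) (hCl : IsClosed C) (hCo : Convex ℝ C)
    (P : EuclideanSpace ℝ (Fin n) → EuclideanSpace ℝ (Fin n))
    (hP : ∀ x, P x ∈ C ∧ ∀ z ∈ C, ‖x - P x‖ ≤ ‖x - z‖)
    (α β : ℝ) (hα : α ∈ Set.Ioc (0:ℝ) 1) (hβ : β ∈ Set.Ico (0:ℝ) 1)
    (L : PiLp 2 (fun _ : Fin N => EuclideanSpace ℝ (Fin n)) →
         PiLp 2 (fun _ : Fin N => EuclideanSpace ℝ (Fin n)))
    (hL : ∀ x i, L x i = ∑ j, A i j • x j)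
    (T : PiLp 2 (fun _ : Fin N => EuclideanSpace ℝ (Fin n)) →
         PiLp 2 (fun _ : Fin N => EuclideanSpace ℝ (Fin n)))
    (hT : ∀ w i, T w i = (1 - β) • P (w i) + β • ((2:ℝ) • P (w i) - w i))
    (S : PiLp 2 (fun _ : Fin N => EuclideanSpace ℝ (Fin n)) →
         PiLp 2 (fun _ : Fin N => EuclideanSpace ℝ (Fin n)))
    (hS : ∀ w, S w = (1 - α) • L w + α • L (T w)) :
    ({w | S w = w} = {w | ∀ i j : Fin N, w i = w j} ∩ {w | ∀ i, w i ∈ C}) ∧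
    ∀ c ∈ C, S (WithLp.toLp 2 (fun _ => c)) = WithLp.toLp 2 (fun _ => c) := by
  obtain ⟨hα0, hα1⟩ := hα
  obtain ⟨hβ0, hβ1⟩ := hβ
  -- the projection fixes points of C
  have hPfix : ∀ x ∈ C, P x = x := by
    intro x hx
    have h := (hP x).2 x hx
    rw [sub_self, norm_zero] at h
    have h2 : x - P x = 0 := norm_le_zero_iff.1 h
    exact (sub_eq_zero.mp h2).symm
  -- T fixes points of C (blockwise formula)
  have hTc : ∀ x ∈ C, (1 - β) • P x + β • ((2:ℝ) • P x - x) = x := by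
    intro x hx
    rw [hPfix x hx]
    module
  -- if all blocks are equal and in C then w is a fixed point of S
  have hSfix : ∀ w : PiLp 2 (fun _ : Fin N => EuclideanSpace ℝ (Fin n)),
      (∀ i j : Fin N, w i = w j) → (∀ i, w i ∈ C) → S w = w := by
    intro w hcons hmem
    have hTw : T w = w := PiLp.ext fun i => by rw [hT]; exact hTc (w i) (hmem i)
    have hLw : L w = w := PiLp.ext fun i => by
      rw [hL]
      rw [Finset.sum_congr rfl fun j (_ : j ∈ Finset.univ) => by rw [hcons j i]]
      rw [← Finset.sum_smul, hrow, one_smul]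
    rw [hS, hTw, hLw, ← add_smul]
    rw [show (1 - α) + α = 1 by ring, one_smul]
  constructor
  · ext w
    simp only [Set.mem_setOf_eq, Set.mem_inter_iff]
    constructor
    · intro hw
      -- the hard direction
      obtain ⟨c, hc⟩ := hC
      set v : Fin N → EuclideanSpace ℝ (Fin n) :=
        fun i => (1 - α) • w i + α • T w i with hv
      have hwv : ∀ i, w i = ∑ j, A i j • v j := by
        intro i
        have h1 : ((1 - α) • L w + α • L (T w)) i = w i := by
          rw [← hS, hw]
        have h2 : (1 - α) • (L w i) + α • (L (T w) i) = w i := by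
          rw [← h1, PiLp.add_apply, PiLp.smul_apply, PiLp.smul_apply]
        rw [hL, hL] at h2
        rw [← h2, Finset.smul_sum, Finset.smul_sum, ← Finset.sum_add_distrib]
        refine Finset.sum_congr rfl fun j _ => ?_
        simp only [hv]
        rw [smul_add, smul_smul, smul_smul, smul_smul, smul_smul,
          mul_comm (A i j) (1 - α), mul_comm (A i j) α]
      set x : Fin N → EuclideanSpace ℝ (Fin n) := fun j => v j - c with hx
      have hsumc : ∀ i, ∑ j, A i j • (c : EuclideanSpace ℝ (Fin n)) = c := by
        intro i; rw [← Finset.sum_smul, hrow, one_smul]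
      have hwc : ∀ i, w i - c = ∑ j, A i j • x j := by
        intro i
        have : ∑ j, A i j • x j = (∑ j, A i j • v j) - ∑ j, A i j • (c : EuclideanSpace ℝ (Fin n)) := by
          rw [← Finset.sum_sub_distrib]
          exact Finset.sum_congr rfl fun j _ => by rw [hx]; exact smul_sub _ _ _
        rw [this, hsumc, ← hwv]
      -- variance identity per row, summed with column stochasticity
      have hvar : ∀ i, (∑ j, A i j * ‖x j‖ ^ 2) - ‖w i - c‖ ^ 2
          = (1 / 2) * ∑ j, ∑ k, A i j * A i k * ‖x j - x k‖ ^ 2 := by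
        intro i
        rw [hwc i]
        exact my_variance (fun j => A i j) (hrow i) x
      have hsum1 : ∑ i, ∑ j, A i j * ‖x j‖ ^ 2 = ∑ j, ‖x j‖ ^ 2 := by
        rw [Finset.sum_comm]
        exact Finset.sum_congr rfl fun j _ => by rw [← Finset.sum_mul, hcol, one_mul]
      have hD : (∑ j, ‖x j‖ ^ 2) - (∑ i, ‖w i - c‖ ^ 2)
          = ∑ i, (1 / 2) * ∑ j, ∑ k, A i j * A i k * ‖x j - x k‖ ^ 2 := by
        rw [← hsum1, ← Finset.sum_sub_distrib]
        exact Finset.sum_congr rfl fun i _ => hvar i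
      -- blockwise nonexpansiveness
      have hTle : ∀ i, ‖T w i - c‖ ≤ ‖w i - c‖ := fun i => by
        rw [hT]; exact my_T_step_le hCo hP hβ0 hβ1.le hc (w i)
      have hxle : ∀ i, ‖x i‖ ≤ ‖w i - c‖ := by
        intro i
        have hxi : x i = (1 - α) • (w i - c) + α • (T w i - c) := by
          rw [hx, hv]; module
        rw [hxi]
        have h3 := norm_add_le ((1 - α) • (w i - c)) (α • (T w i - c))
        rw [norm_smul, norm_smul, Real.norm_eq_abs, Real.norm_eq_abs,
          abs_of_nonneg (by linarith : (0:ℝ) ≤ 1 - α), abs_of_nonneg hα0.le] at h3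
        have h4 := mul_le_mul_of_nonneg_left (hTle i) hα0.le
        calc ‖(1 - α) • (w i - c) + α • (T w i - c)‖
            ≤ (1 - α) * ‖w i - c‖ + α * ‖T w i - c‖ := h3
          _ ≤ (1 - α) * ‖w i - c‖ + α * ‖w i - c‖ := by linarith
          _ = ‖w i - c‖ := by ring
      have hsum2 : ∑ j, ‖x j‖ ^ 2 ≤ ∑ i, ‖w i - c‖ ^ 2 :=
        Finset.sum_le_sum fun i _ => pow_le_pow_left₀ (norm_nonneg _) (hxle i) 2
      have hDnn : ∀ i ∈ Finset.univ, (0:ℝ) ≤ (1 / 2) * ∑ j, ∑ k, A i j * A i k * ‖x j - x k‖ ^ 2 :=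
        fun i _ => mul_nonneg (by norm_num) (Finset.sum_nonneg fun j _ =>
          Finset.sum_nonneg fun k _ =>
            mul_nonneg (mul_nonneg (hnonneg i j) (hnonneg i k)) (sq_nonneg _))
      have hD0 : ∑ i, (1 / 2) * ∑ j, ∑ k, A i j * A i k * ‖x j - x k‖ ^ 2 = 0 :=
        le_antisymm (by linarith) (Finset.sum_nonneg hDnn)
      -- every edge forces equality of blocks of x
      have hEdge : ∀ i j, 0 < A i j → x j = x i := by
        intro i j hij
        by_contra hne
        have hpos : 0 < A i j * A i i * ‖x j - x i‖ ^ 2 :=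
          mul_pos (mul_pos hij (hdiag i))
            (pow_pos (norm_pos_iff.2 (sub_ne_zero.2 hne)) 2)
        have h5 : A i j * A i i * ‖x j - x i‖ ^ 2 ≤ ∑ k, A i j * A i k * ‖x j - x k‖ ^ 2 :=
          Finset.single_le_sum (f := fun k => A i j * A i k * ‖x j - x k‖ ^ 2) (fun k _ =>
            mul_nonneg (mul_nonneg (hnonneg i j) (hnonneg i k)) (sq_nonneg _))
            (Finset.mem_univ i)
        have h6 : ∑ k, A i j * A i k * ‖x j - x k‖ ^ 2
            ≤ ∑ j', ∑ k, A i j' * A i k * ‖x j' - x k‖ ^ 2 :=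
          Finset.single_le_sum (f := fun j' => ∑ k, A i j' * A i k * ‖x j' - x k‖ ^ 2)
            (fun j' _ => Finset.sum_nonneg fun k _ =>
            mul_nonneg (mul_nonneg (hnonneg i j') (hnonneg i k)) (sq_nonneg _))
            (Finset.mem_univ j)
        have h7 : (1 / 2) * ∑ j', ∑ k, A i j' * A i k * ‖x j' - x k‖ ^ 2
            ≤ ∑ i, (1 / 2) * ∑ j, ∑ k, A i j * A i k * ‖x j - x k‖ ^ 2 :=
          Finset.single_le_sum hDnn (Finset.mem_univ i)
        rw [hD0] at h7
        linarith
      have hAll : ∀ j i, x j = x i := by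
        intro j i
        induction hconn j i with
        | refl => rfl
        | tail hjb hbc ih => exact ih.trans (hEdge _ _ hbc)
      have hveq : ∀ j i, v j = v i := by
        intro j i
        have h8 : v j - c = v i - c := hAll j i
        have := congrArg (· + c) h8
        simpa using this
      have hwv2 : ∀ i, w i = v i := by
        intro i
        rw [hwv i, Finset.sum_congr rfl fun j (_ : j ∈ Finset.univ) => by rw [hveq j i],
          ← Finset.sum_smul, hrow, one_smul]
      have hTfix : ∀ i, T w i = w i := by
        intro i
        have h9 : w i = (1 - α) • w i + α • T w i := hwv2 i
        have h10 : α • T w i = α • w i := by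
          have e1 : α • T w i = ((1 - α) • w i + α • T w i) - (1 - α) • w i := by
            module
          rw [e1, ← h9]
          module
        exact smul_right_injective _ hα0.ne' h10
      have hmemC : ∀ i, w i ∈ C := by
        intro i
        have h11 := hTfix i
        rw [hT] at h11
        have h12 : (1 + β) • (P (w i) - w i) = 0 := by
          have h13 : (1 - β) • P (w i) + β • ((2:ℝ) • P (w i) - w i) - w i
              = (1 + β) • (P (w i) - w i) := by module
          rw [← h13, h11, sub_self]
        have h14 : P (w i) - w i = 0 :=
          (smul_eq_zero.mp h12).resolve_left (by intro h; exact absurd h (by positivity)) 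
        have h15 : P (w i) = w i := by
          have := sub_eq_zero.mp h14; exact this
        rw [← h15]; exact (hP (w i)).1
      exact ⟨fun i j => by rw [hwv2 i, hwv2 j, hveq i j], hmemC⟩
    · rintro ⟨hcons, hmem⟩
      exact hSfix w hcons hmem
  · intro c hc
    exact hSfix (WithLp.toLp 2 (fun _ => c)) (fun i j => rfl) (fun i => hc)
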